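/- Suppose U is a nonprincipal ultrafilter on ω that is not a P-point. Then there exists a nonprincipal ultrafilter V on ω such that ⟨V, ⊇⟩ ≤_T ⟨U, ⊇*⟩. -/

import Mathlib

open Cardinal

/-- A subset `S` of a quasiorder `⟨α, r⟩` is bounded if it has an upper bound. -/
def TBounded {α : Type*} (r : α → α → Prop) (S : Set α) : Prop :=
  ∃ b, ∀ x ∈ S, r x b

/-- A subset `C` of `⟨α, r⟩` is cofinal if every element lies below a member of `C`. -/
def TCofinal {α : Type*} (r : α → α → Prop) (C : Set α) : Prop :=
  ∀ x, ∃ c ∈ C, r x c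

/-- A Tukey map: the image of every unbounded set is unbounded. -/
def IsTukeyMap {α β : Type*} (ra : α → α → Prop) (rb : β → β → Prop) (f : α → β) : Prop :=
  ∀ S : Set α, ¬ TBounded ra S → ¬ TBounded rb (f '' S)

/-- Tukey reducibility `P ≤_T Q`: there is a Tukey map from `P` to `Q`. -/
def TukeyLE {α β : Type*} (ra : α → α → Prop) (rb : β → β → Prop) : Prop :=
  ∃ f : α → β, IsTukeyMap ra rb f

/-- Tukey equivalence `P ≡_T Q`. -/
def TukeyEquiv {α β : Type*} (ra : α → α → Prop) (rb : β → β → Prop) : Prop :=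
  TukeyLE ra rb ∧ TukeyLE rb ra

/-- Strict Tukey reducibility `P <_T Q`. -/
def TukeyLT {α β : Type*} (ra : α → α → Prop) (rb : β → β → Prop) : Prop :=
  TukeyLE ra rb ∧ ¬ TukeyLE rb ra

/-- A directed set: a preorder in which every finite subset (in particular `∅` and pairs)
has an upper bound; equivalently, a nonempty directed preorder. -/
structure IsDirectedSet {α : Type*} (r : α → α → Prop) : Prop where
  nonempty : Nonempty α
  refl : ∀ x, r x x
  trans : ∀ {x y z}, r x y → r y z → r x z
  directed : ∀ x y, ∃ z, r x z ∧ r y z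

/-- `U` is a nonprincipal ultrafilter. -/
def Nonprincipal (U : Ultrafilter ℕ) : Prop := ∀ a : ℕ, U ≠ pure a

/-- `⟨U, ⊇⟩`: the members of `U` ordered by reverse inclusion (`A ≤ B` iff `A ⊇ B`). -/
def revIncl (U : Ultrafilter ℕ) : {A : Set ℕ // A ∈ U} → {A : Set ℕ // A ∈ U} → Prop :=
  fun A B => (B : Set ℕ) ⊆ (A : Set ℕ)

/-- `⟨U, ⊇*⟩`: the members of `U` preordered by reverse almost inclusion
(`A ≤ B` iff `A ⊇* B` iff `B \\ A` is finite). -/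
def revAlmostIncl (U : Ultrafilter ℕ) : {A : Set ℕ // A ∈ U} → {A : Set ℕ // A ∈ U} → Prop :=
  fun A B => ((B : Set ℕ) \ (A : Set ℕ)).Finite

/-- `U` is a P-point: every countable subset of `U` has a pseudointersection in `U`,
i.e. a member of `U` almost contained in every set of the subset. -/
def IsPPoint (U : Ultrafilter ℕ) : Prop :=
  ∀ S : Set (Set ℕ), S.Countable → (∀ A ∈ S, A ∈ U) →
    ∃ B ∈ U, ∀ A ∈ S, (B \ A).Finite

/-- If `U` is a nonprincipal non-P-point, then there is a nonprincipal ultrafilter `V`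
with `⟨V, ⊇⟩ ≤_T ⟨U, ⊇*⟩`. -/
theorem stmt14 (U : Ultrafilter ℕ) (hU : Nonprincipal U) (hnp : ¬ IsPPoint U) :
    ∃ V : Ultrafilter ℕ, Nonprincipal V ∧ TukeyLE (revIncl V) (revAlmostIncl U) := by
  rw [IsPPoint] at hnp
  push_neg at hnp
  obtain ⟨S, hScount, hSU, hSunb⟩ := hnp
  have hSne : S.Nonempty := by
    obtain ⟨A, hA, -⟩ := hSunb Set.univ Filter.univ_mem
    exact ⟨A, hA⟩
  obtain ⟨e, hrange⟩ := Set.Countable.exists_eq_range hScount hSne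
  set A : ℕ → Set ℕ := fun n => ⋂ i ∈ Finset.range n, e i with hAdef
  have heU : ∀ i, e i ∈ U := fun i => hSU _ (hrange ▸ Set.mem_range_self i)
  have hAU : ∀ n, A n ∈ U := by
    intro n
    exact (Filter.biInter_finset_mem _).mpr fun i _ => heU i
  have hA0 : ∀ x, x ∈ A 0 := by
    intro x; simp [hAdef]
  have hAsub : ∀ i, A (i + 1) ⊆ e i := by
    intro i
    exact Set.biInter_subset_of_mem (Finset.mem_range.mpr (Nat.lt_succ_self i))
  classical
  set g : ℕ → ℕ := fun x => if h : ∃ n, x ∉ A n then Nat.find h else 0 with hgdef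
  have hgle : ∀ x n, x ∉ A n → g x ≤ n := by
    intro x n hn
    simp only [hgdef]
    rw [dif_pos ⟨n, hn⟩]
    exact Nat.find_min' _ hn
  have hg0 : ∀ x, g x = 0 → ∀ n, x ∈ A n := by
    intro x hx n
    by_contra hxn
    simp only [hgdef] at hx
    rw [dif_pos ⟨n, hxn⟩] at hx
    exact (hx ▸ Nat.find_spec (⟨n, hxn⟩ : ∃ m, x ∉ A m)) (hA0 x)
  have hgspec : ∀ x, g x ≠ 0 → x ∉ A (g x) := by
    intro x hx
    by_cases h : ∃ n, x ∉ A n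
    · simp only [hgdef]
      rw [dif_pos h]
      simp only [hgdef] at hx ⊢
      rw [dif_pos h] at hx
      exact Nat.find_spec h
    · exfalso; apply hx; simp only [hgdef]; rw [dif_neg h]
  -- key: every member of U has an infinite fiber intersection
  have keyInf : ∀ B ∈ U, ∃ y, (B ∩ g ⁻¹' {y}).Infinite := by
    intro B hB
    by_contra hfin
    push_neg at hfin
    try simp only [Set.not_infinite] at hfin
    obtain ⟨A0, hA0S, hinf⟩ := hSunb B hB
    obtain ⟨i, rfl⟩ : ∃ i, e i = A0 := by
      rw [hrange] at hA0S; exact hA0S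
    apply hinf
    have hsub : B \ e i ⊆ ⋃ y ∈ Finset.range (i + 2), B ∩ g ⁻¹' {y} := by
      intro x hx
      have hxA : x ∉ A (i + 1) := fun h => hx.2 (hAsub i h)
      have := hgle x (i + 1) hxA
      refine Set.mem_biUnion (Finset.mem_range.mpr ?_) ⟨hx.1, rfl⟩
      omega
    exact Set.Finite.subset (Set.Finite.biUnion (Finset.finite_toSet _) fun y _ => hfin y) hsub
  refine ⟨Ultrafilter.map g U, ?_, ?_⟩
  · -- nonprincipal
    intro a ha
    have hga : g ⁻¹' {a} ∈ U := by
      rw [← Ultrafilter.mem_map, ha]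
      exact Ultrafilter.mem_pure.mpr rfl
    match a with
    | 0 =>
      obtain ⟨A0, hA0S, hinf⟩ := hSunb _ hga
      obtain ⟨i, rfl⟩ : ∃ i, e i = A0 := by rw [hrange] at hA0S; exact hA0S
      apply hinf
      have : g ⁻¹' {0} \ e i = ∅ := by
        ext x
        simp only [Set.mem_diff, Set.mem_preimage, Set.mem_singleton_iff, Set.mem_empty_iff_false,
          iff_false, not_and, not_not]
        intro hx
        exact hAsub i (hg0 x hx (i + 1))
      rw [this]
      exact Set.finite_empty
    | m + 1 =>
      have h1 : g ⁻¹' {m + 1} ∩ A (m + 1) ∈ U := Filter.inter_mem hga (hAU (m + 1))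
      have h2 : g ⁻¹' {m + 1} ∩ A (m + 1) = ∅ := by
        ext x
        simp only [Set.mem_inter_iff, Set.mem_preimage, Set.mem_singleton_iff,
          Set.mem_empty_iff_false, iff_false, not_and]
        intro hx
        have := hgspec x (by omega : g x ≠ 0)
        rw [hx] at this
        exact this
      rw [h2] at h1
      exact Filter.empty_notMem _ h1
  · -- Tukey reducibility
    refine ⟨fun Y => ⟨g ⁻¹' Y.1, Ultrafilter.mem_map.mp Y.2⟩, ?_⟩
    intro T hTunb hTbdd
    apply hTunb
    obtain ⟨⟨B, hB⟩, hbd⟩ := hTbdd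
    set C : Set ℕ := {y | (B ∩ g ⁻¹' {y}).Infinite} with hCdef
    have hCV : C ∈ Ultrafilter.map g U := by
      rw [Ultrafilter.mem_map]
      by_contra hc
      have hcc : (g ⁻¹' C)ᶜ ∈ U := Ultrafilter.compl_mem_iff_notMem.mpr hc
      obtain ⟨y, hy⟩ := keyInf (B ∩ (g ⁻¹' C)ᶜ) (Filter.inter_mem hB hcc)
      obtain ⟨x, hx⟩ := hy.nonempty
      have hgx : g x = y := hx.2
      have hnotC : g x ∉ C := hx.1.2
      apply hnotC
      rw [hgx]
      exact hy.mono fun z hz => ⟨hz.1.1, hz.2⟩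
    refine ⟨⟨C, hCV⟩, ?_⟩
    rintro ⟨Y, hY⟩ hYT
    have hfY : ((B : Set ℕ) \ (g ⁻¹' Y)).Finite :=
      hbd _ ⟨⟨Y, hY⟩, hYT, rfl⟩
    intro y hy
    have hyC : (B ∩ g ⁻¹' {y}).Infinite := hy
    have := (hyC.diff hfY).nonempty
    obtain ⟨x, hx⟩ := this
    have hxB : x ∈ B := hx.1.1
    have hgx : g x = y := hx.1.2
    have hxY : x ∈ g ⁻¹' Y := by
      by_contra hxy
      exact hx.2 ⟨hxB, hxy⟩
    rw [← hgx]
    exact hxY
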